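/- Among all delay sequences with a fixed common marginal distribution, the i.i.d. delay sequence minimizes the AoI in the usual stochastic order: if (D_n^{(1)}) are mutually independent with D_n^{(1)} =_d D_n^{(2)} for each n, and each finite vector (D_0^{(2)},…,D_m^{(2)}) is positively quadrant dependent (i.e., ≥_PQD the vector of independent copies of its marginals), then A_t^{(1)} ≤_st A_t^{(2)} for all t ≥ 0. -/

import Mathlib

open MeasureTheory
open scoped Classical

def arrivalSet {Ω : Type*} (τ : ℝ) (D : ℕ → Ω → ℝ) (t : ℝ) (ω : Ω) : Set ℕ :=
  {n | (n : ℝ) * τ + D n ω ≤ t}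

noncomputable def AoI {Ω : Type*} (τ : ℝ) (D : ℕ → Ω → ℝ) (t : ℝ) (ω : Ω) : EReal :=
  if (arrivalSet τ D t ω).Nonempty then
    ((t - (sSup (arrivalSet τ D t ω) : ℕ) * τ : ℝ) : EReal)
  else ⊤

lemma arrival_bdd {Ω : Type*} {τ : ℝ} (hτ : 0 < τ) {D : ℕ → Ω → ℝ}
    (hD : ∀ n ω, 0 ≤ D n ω) (t : ℝ) (ω : Ω) {n : ℕ}
    (hn : n ∈ arrivalSet τ D t ω) : n ≤ Nat.floor (t / τ) := by
  have h1 : (n : ℝ) * τ ≤ t := le_trans (by linarith [hD n ω]) hn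
  have h2 : (n : ℝ) ≤ t / τ := (le_div_iff₀ hτ).2 h1
  exact Nat.le_floor h2

lemma key_event {Ω : Type*} {τ : ℝ} (hτ : 0 < τ) {D : ℕ → Ω → ℝ}
    (hD : ∀ n ω, 0 ≤ D n ω) (t x : ℝ) :
    {ω | (x : EReal) < AoI τ D t ω} =
      {ω | ∀ i : Fin (Nat.floor (t / τ) + 1),
        (if t - x ≤ ((i : ℕ) : ℝ) * τ then t - ((i : ℕ) : ℝ) * τ else -1) < D (i : ℕ) ω} := by
  ext ω
  simp only [Set.mem_setOf_eq]
  constructor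
  · intro h i
    by_cases hi : t - x ≤ ((i : ℕ) : ℝ) * τ
    · rw [if_pos hi]
      by_contra hcon
      push_neg at hcon
      have hmem : (i : ℕ) ∈ arrivalSet τ D t ω := by
        simpa [arrivalSet] using by linarith
      have hne : (arrivalSet τ D t ω).Nonempty := ⟨_, hmem⟩
      have hbdd : BddAbove (arrivalSet τ D t ω) :=
        ⟨Nat.floor (t / τ), fun n hn => arrival_bdd hτ hD t ω hn⟩
      have hle : (i : ℕ) ≤ sSup (arrivalSet τ D t ω) := le_csSup hbdd hmem
      rw [AoI, if_pos hne] at h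
      have hlt : x < t - (sSup (arrivalSet τ D t ω) : ℕ) * τ := by
        exact_mod_cast h
      have hmul : ((i : ℕ) : ℝ) * τ ≤ ((sSup (arrivalSet τ D t ω) : ℕ) : ℝ) * τ := by
        have := (Nat.cast_le (α := ℝ)).2 hle
        nlinarith
      linarith
    · rw [if_neg hi]
      have := hD (i : ℕ) ω
      linarith
  · intro h
    rw [AoI]
    by_cases hne : (arrivalSet τ D t ω).Nonempty
    · rw [if_pos hne]
      have hbdd : BddAbove (arrivalSet τ D t ω) :=
        ⟨Nat.floor (t / τ), fun n hn => arrival_bdd hτ hD t ω hn⟩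
      set N := sSup (arrivalSet τ D t ω) with hN
      have hmem : N ∈ arrivalSet τ D t ω := Nat.sSup_mem hne hbdd
      have hNle : N ≤ Nat.floor (t / τ) := arrival_bdd hτ hD t ω hmem
      have hh := h ⟨N, Nat.lt_succ_of_le hNle⟩
      have hmem' : (N : ℝ) * τ + D N ω ≤ t := hmem
      by_cases hi : t - x ≤ (N : ℝ) * τ
      · rw [if_pos hi] at hh
        simp only at hh
        linarith
      · push_neg at hi
        exact_mod_cast (show x < t - (N : ℝ) * τ by linarith)
    · rw [if_neg hne]
      exact EReal.coe_lt_top x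

theorem stmt12 {Ω₁ Ω₂ : Type*} [MeasurableSpace Ω₁] [MeasurableSpace Ω₂]
    (ℙ₁ : Measure Ω₁) (ℙ₂ : Measure Ω₂) [IsProbabilityMeasure ℙ₁] [IsProbabilityMeasure ℙ₂]
    (τ : ℝ) (hτ : 0 < τ) (D₁ : ℕ → Ω₁ → ℝ) (D₂ : ℕ → Ω₂ → ℝ)
    (hD₁ : ∀ n ω, 0 ≤ D₁ n ω) (hD₂ : ∀ n ω, 0 ≤ D₂ n ω)
    (hmeas₁ : ∀ n, Measurable (D₁ n)) (hmeas₂ : ∀ n, Measurable (D₂ n))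
    (hindep : ProbabilityTheory.iIndepFun D₁ ℙ₁)
    (hmarg : ∀ n : ℕ, Measure.map (D₁ n) ℙ₁ = Measure.map (D₂ n) ℙ₂)
    (hPQDlow : ∀ (m : ℕ) (x : Fin (m + 1) → ℝ),
      (∏ i : Fin (m + 1), ℙ₂ {ω | D₂ (i : ℕ) ω ≤ x i}) ≤
        ℙ₂ {ω | ∀ i : Fin (m + 1), D₂ (i : ℕ) ω ≤ x i})
    (hPQDup : ∀ (m : ℕ) (x : Fin (m + 1) → ℝ),
      (∏ i : Fin (m + 1), ℙ₂ {ω | x i < D₂ (i : ℕ) ω}) ≤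
        ℙ₂ {ω | ∀ i : Fin (m + 1), x i < D₂ (i : ℕ) ω}) :
    ∀ t x : ℝ, 0 ≤ t →
      ℙ₁ {ω | (x : EReal) < AoI τ D₁ t ω} ≤ ℙ₂ {ω | (x : EReal) < AoI τ D₂ t ω} := by
  intro t x ht
  set M := Nat.floor (t / τ) with hM
  set xv : ℕ → ℝ := fun n =>
    if t - x ≤ (n : ℝ) * τ then t - (n : ℝ) * τ else -1 with hxv
  rw [key_event hτ hD₁ t x, key_event hτ hD₂ t x]
  have hset₁ : {ω | ∀ i : Fin (M + 1),
        (if t - x ≤ ((i : ℕ) : ℝ) * τ then t - ((i : ℕ) : ℝ) * τ else -1) < D₁ (i : ℕ) ω}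
      = ⋂ n ∈ Finset.range (M + 1), D₁ n ⁻¹' Set.Ioi (xv n) := by
    ext ω
    simp only [Set.mem_setOf_eq, Set.mem_iInter, Finset.mem_range, Set.mem_preimage,
      Set.mem_Ioi, hxv]
    constructor
    · intro h n hn
      exact h ⟨n, hn⟩
    · intro h i
      exact h (i : ℕ) i.isLt
  rw [hset₁]
  have hprod := hindep.measure_inter_preimage_eq_mul (Finset.range (M + 1))
    (sets := fun n => Set.Ioi (xv n)) (fun i _ => measurableSet_Ioi)
  rw [hprod]
  have hmargpt : ∀ n : ℕ, ℙ₁ (D₁ n ⁻¹' Set.Ioi (xv n)) = ℙ₂ (D₂ n ⁻¹' Set.Ioi (xv n)) := by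
    intro n
    rw [← Measure.map_apply (hmeas₁ n) measurableSet_Ioi,
      ← Measure.map_apply (hmeas₂ n) measurableSet_Ioi, hmarg n]
  calc ∏ n ∈ Finset.range (M + 1), ℙ₁ (D₁ n ⁻¹' Set.Ioi (xv n))
      = ∏ i : Fin (M + 1), ℙ₂ {ω | xv (i : ℕ) < D₂ (i : ℕ) ω} := by
        rw [Fin.prod_univ_eq_prod_range (fun n => ℙ₂ {ω | xv n < D₂ n ω})]
        refine Finset.prod_congr rfl fun n _ => ?_
        rw [hmargpt n]
        rfl
    _ ≤ ℙ₂ {ω | ∀ i : Fin (M + 1), xv (i : ℕ) < D₂ (i : ℕ) ω} := hPQDup M (fun i => xv (i : ℕ))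
    _ = ℙ₂ {ω | ∀ i : Fin (M + 1),
        (if t - x ≤ ((i : ℕ) : ℝ) * τ then t - ((i : ℕ) : ℝ) * τ else -1) < D₂ (i : ℕ) ω} := rfl
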